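/- Let G = C_{n_1} × ... × C_{n_k} with 1 < n_1 | n_2 | ... | n_k and k ≥ 2, with generators a_1, ..., a_k. Define H_k = ⟨a_1, ..., a_{k−1}⟩ and, for 1 ≤ i ≤ k−1, H_i = ⟨a_1, ..., a_{i−1}, a_i a_k^{n_k/n_i}, a_{i+1}, ..., a_{k−1}⟩. Then ∩_{i=1}^k H_i = 1. -/

import Mathlib

/-- The abelian group with invariant factors `n 0 ∣ n 1 ∣ ... ∣ n (k-1)`. -/
abbrev IG (k : ℕ) (n : Fin k → ℕ) := ∀ i : Fin k, Multiplicative (ZMod (n i))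

/-- The canonical generator of the `i`-th cyclic factor. -/
abbrev gen (k : ℕ) (n : Fin k → ℕ) (i : Fin k) : IG k n :=
  Pi.mulSingle i (Multiplicative.ofAdd (1 : ZMod (n i)))

theorem stmt_11 (k : ℕ) (hk : 2 ≤ k) (n : Fin k → ℕ)
    (h1 : ∀ i, 1 < n i) (hdvd : ∀ i j : Fin k, i ≤ j → n i ∣ n j) :
    (⨅ i : Fin k,
      if (i : ℕ) < k - 1 then
        Subgroup.closure
          ((fun j : Fin k => if j = i then
              gen k n i * gen k n ⟨k - 1, by omega⟩ ^ (n ⟨k - 1, by omega⟩ / n i)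
            else gen k n j) '' {j : Fin k | (j : ℕ) < k - 1})
      else
        Subgroup.closure (gen k n '' {j : Fin k | (j : ℕ) < k - 1})) = ⊥ := by
  have hk1 : k - 1 < k := by omega
  set m : Fin k := ⟨k - 1, hk1⟩ with hm
  haveI : NeZero (n m) := ⟨by have := h1 m; omega⟩
  rw [eq_bot_iff]
  intro x hx
  rw [Subgroup.mem_iInf] at hx
  -- last coordinate is trivial
  have hxm : x m = 1 := by
    have h := hx m
    rw [if_neg (lt_irrefl (k - 1))] at h
    have : x ∈ (Pi.evalMonoidHom (fun i => Multiplicative (ZMod (n i))) m).ker := by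
      refine (Subgroup.closure_le _).2 ?_ h
      rintro y ⟨j, hj, rfl⟩
      have hjm : j ≠ m := by
        intro e; rw [e, hm] at hj; simp at hj
      simpa [MonoidHom.mem_ker, Pi.evalMonoidHom] using Pi.mulSingle_eq_of_ne (Ne.symm hjm) _
    simpa [MonoidHom.mem_ker, Pi.evalMonoidHom] using this
  -- other coordinates
  have hxi : ∀ i : Fin k, (i : ℕ) < k - 1 → x i = 1 := by
    intro i hi
    have him : i ≤ m := by
      rw [Fin.le_def]; show (i : ℕ) ≤ k - 1; omega
    have hdm : n i ∣ n m := hdvd i m him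
    set d : ℕ := n m / n i with hd
    have hnd : n i * d = n m := Nat.mul_div_cancel' hdm
    -- the embedding ZMod (n i) →+ ZMod (n m), 1 ↦ d
    have hker : (((n i : ℤ)) • ((d : ZMod (n m)))) = 0 := by
      rw [natCast_zsmul, nsmul_eq_mul, ← Nat.cast_mul, hnd, ZMod.natCast_self]
    set ι : ZMod (n i) →+ ZMod (n m) :=
      ZMod.lift (n i) ⟨zmultiplesHom (ZMod (n m)) ((d : ℕ) : ZMod (n m)), hker⟩ with hι
    have hι1 : ι 1 = ((d : ℕ) : ZMod (n m)) := by
      have : ((1 : ℤ) : ZMod (n i)) = 1 := by push_cast; rfl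
      rw [hι, ← this, ZMod.lift_coe]
      simp [zmultiplesHom]
    -- the homomorphism detecting membership in H i
    set φ : IG k n →* Multiplicative (ZMod (n m)) :=
      { toFun := fun y => Multiplicative.ofAdd (ι (Multiplicative.toAdd (y i)) - Multiplicative.toAdd (y m))
        map_one' := by simp
        map_mul' := by
          intro a b
          simp only [Pi.mul_apply, toAdd_mul, map_add, ← ofAdd_add]
          ring_nf } with hφ
    have h := hx i
    rw [if_pos hi] at h
    have hxker : x ∈ φ.ker := by
      refine (Subgroup.closure_le _).2 ?_ h
      rintro y ⟨j, hj, rfl⟩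
      simp only [Set.mem_setOf_eq] at hj
      have hjm : j ≠ m := by
        intro e; rw [e, hm] at hj; simp at hj
      dsimp only
      by_cases hji : j = i
      · rw [if_pos hji]
        have him' : i ≠ m := by
          intro e; rw [e, hm] at hi; simp at hi
        rw [SetLike.mem_coe, MonoidHom.mem_ker, hφ]
        simp only [MonoidHom.coe_mk, OneHom.coe_mk, Pi.mul_apply, Pi.pow_apply]
        rw [show gen k n i i = Multiplicative.ofAdd (1 : ZMod (n i)) from Pi.mulSingle_eq_same _ _,
          show gen k n m i = 1 from Pi.mulSingle_eq_of_ne him' _,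
          show gen k n i m = 1 from Pi.mulSingle_eq_of_ne (Ne.symm him') _,
          show gen k n m m = Multiplicative.ofAdd (1 : ZMod (n m)) from Pi.mulSingle_eq_same _ _]
        simp [hι1, ← ofAdd_nsmul]
        rw [← hd, div_self']
      · rw [if_neg hji]
        rw [SetLike.mem_coe, MonoidHom.mem_ker, hφ]
        simp only [MonoidHom.coe_mk, OneHom.coe_mk]
        rw [show gen k n j i = 1 from Pi.mulSingle_eq_of_ne (Ne.symm hji) _,
          show gen k n j m = 1 from Pi.mulSingle_eq_of_ne (Ne.symm hjm) _]
        simp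
    rw [MonoidHom.mem_ker, hφ] at hxker
    simp only [MonoidHom.coe_mk, OneHom.coe_mk, hxm] at hxker
    have h0 : ι (Multiplicative.toAdd (x i)) = 0 := by
      have := hxker
      rw [← ofAdd_zero] at this
      have := Multiplicative.ofAdd.injective this
      simpa using this
    -- deduce x i = 1
    set a : ZMod (n i) := Multiplicative.toAdd (x i) with ha
    haveI : NeZero (n i) := ⟨by have := h1 i; omega⟩
    have hav : ((a.val : ℤ) : ZMod (n i)) = a := by
      push_cast
      exact ZMod.natCast_rightInverse a
    have h2 : ((a.val * d : ℕ) : ZMod (n m)) = 0 := by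
      rw [← h0, ← hav, hι, ZMod.lift_coe]
      simp [zmultiplesHom, nsmul_eq_mul]
    rw [ZMod.natCast_eq_zero_iff] at h2
    rw [← hnd] at h2
    have hd0 : 0 < d := by
      rcases Nat.eq_zero_or_pos d with h | h
      · rw [h, Nat.mul_zero] at hnd; have := h1 m; omega
      · exact h
    have hdvd' : n i ∣ a.val := (mul_dvd_mul_iff_right (by omega : d ≠ 0)).1 h2
    have hval : a.val = 0 := Nat.eq_zero_of_dvd_of_lt hdvd' (ZMod.val_lt a)
    have : a = 0 := (ZMod.val_eq_zero a).1 hval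
    rw [← toAdd_eq_zero, ← ha]
    exact this
  -- conclude
  funext j
  rcases Nat.lt_or_ge (j : ℕ) (k - 1) with h | h
  · exact hxi j h
  · have : j = m := by
      rw [hm]; apply Fin.ext; simp; omega
    rw [this]; exact hxm
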